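/- Fix μ > 0 and a > 0. Then there exist constants C > 0 and κ₀ ∈ (0, 1) (depending on μ and a) such that for all κ ∈ (0, κ₀): | ∫_0^μ ( √(κ + a x²) − √a · x ) dx + (κ/(4√a)) · ln κ | ≤ C κ. -/

import Mathlib

open MeasureTheory Set

private lemma st10_deriva (a κ : ℝ) (ha : 0 < a) (hκ : 0 < κ) (x : ℝ) :
    HasDerivAt (fun y => y * Real.sqrt (κ + a * y ^ 2) / 2
        + κ / (2 * Real.sqrt a) * Real.arsinh (Real.sqrt a * y / Real.sqrt κ)
        - Real.sqrt a * y ^ 2 / 2)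
      (Real.sqrt (κ + a * x ^ 2) - Real.sqrt a * x) x := by
  have hpos : 0 < κ + a * x ^ 2 := by positivity
  have h1 : HasDerivAt (fun y : ℝ => κ + a * y ^ 2) (a * (2 * x)) x := by
    simpa using ((hasDerivAt_pow 2 x).const_mul a).const_add κ
  have h2 : HasDerivAt (fun y => Real.sqrt (κ + a * y ^ 2))
      (a * (2 * x) / (2 * Real.sqrt (κ + a * x ^ 2))) x := h1.sqrt hpos.ne'
  have h3 : HasDerivAt (fun y => y * Real.sqrt (κ + a * y ^ 2) / 2)
      ((1 * Real.sqrt (κ + a * x ^ 2) + x * (a * (2 * x) / (2 * Real.sqrt (κ + a * x ^ 2)))) / 2)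
      x := ((hasDerivAt_id x).mul h2).div_const 2
  have h4 : HasDerivAt (fun y : ℝ => Real.sqrt a * y / Real.sqrt κ)
      (Real.sqrt a / Real.sqrt κ) x := by
    simpa using ((hasDerivAt_id x).const_mul (Real.sqrt a)).div_const (Real.sqrt κ)
  have h5 : HasDerivAt (fun y => Real.arsinh (Real.sqrt a * y / Real.sqrt κ))
      ((Real.sqrt (1 + (Real.sqrt a * x / Real.sqrt κ) ^ 2))⁻¹ * (Real.sqrt a / Real.sqrt κ)) x :=
    (Real.hasDerivAt_arsinh _).comp x h4
  have h6 := (h5.const_mul (κ / (2 * Real.sqrt a)))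
  have h7 : HasDerivAt (fun y : ℝ => Real.sqrt a * y ^ 2 / 2)
      (Real.sqrt a * (2 * x) / 2) x := by
    simpa using ((hasDerivAt_pow 2 x).const_mul (Real.sqrt a)).div_const 2
  have := (h3.add h6).sub h7
  convert this using 1
  on_goal 1 => rfl
  on_goal 1 => rfl
  on_goal 1 => rfl
  have hs : 0 < Real.sqrt (κ + a * x ^ 2) := Real.sqrt_pos.2 hpos
  have hsa : 0 < Real.sqrt a := Real.sqrt_pos.2 ha
  have hsk : 0 < Real.sqrt κ := Real.sqrt_pos.2 hκ
  have hs2 : Real.sqrt (κ + a * x ^ 2) ^ 2 = κ + a * x ^ 2 := Real.sq_sqrt hpos.le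
  have ha2 : Real.sqrt a ^ 2 = a := Real.sq_sqrt ha.le
  have hk2 : Real.sqrt κ ^ 2 = κ := Real.sq_sqrt hκ.le
  have key : Real.sqrt (1 + (Real.sqrt a * x / Real.sqrt κ) ^ 2)
      = Real.sqrt (κ + a * x ^ 2) / Real.sqrt κ := by
    rw [show 1 + (Real.sqrt a * x / Real.sqrt κ) ^ 2
        = (Real.sqrt (κ + a * x ^ 2) / Real.sqrt κ) ^ 2 by
      field_simp
      nlinarith [hs2, ha2, hk2, Real.sq_sqrt (show (0:ℝ) ≤ κ + x ^ 2 * a by positivity)]]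
    exact Real.sqrt_sq (by positivity)
  rw [key]
  field_simp
  linear_combination hs2

private lemma st10_ftc (μ a κ : ℝ) (hμ : 0 < μ) (ha : 0 < a) (hκ : 0 < κ) :
    (∫ x in Set.Ioo (0 : ℝ) μ, (Real.sqrt (κ + a * x ^ 2) - Real.sqrt a * x))
      = μ * Real.sqrt (κ + a * μ ^ 2) / 2
        + κ / (2 * Real.sqrt a) * Real.arsinh (Real.sqrt a * μ / Real.sqrt κ)
        - Real.sqrt a * μ ^ 2 / 2 := by
  have hcont : Continuous fun x : ℝ => Real.sqrt (κ + a * x ^ 2) - Real.sqrt a * x := by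
    fun_prop
  have h := intervalIntegral.integral_eq_sub_of_hasDerivAt (a := 0) (b := μ)
    (fun x _ => st10_deriva a κ ha hκ x) (hcont.intervalIntegrable 0 μ)
  rw [intervalIntegral.integral_of_le hμ.le, MeasureTheory.integral_Ioc_eq_integral_Ioo] at h
  rw [h]
  simp [Real.arsinh_zero]

private lemma st10_logid (μ a κ : ℝ) (hμ : 0 < μ) (ha : 0 < a) (hκ : 0 < κ) :
    Real.arsinh (Real.sqrt a * μ / Real.sqrt κ)
      = Real.log (Real.sqrt a * μ + Real.sqrt (a * μ ^ 2 + κ)) - Real.log κ / 2 := by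
  have hsk : 0 < Real.sqrt κ := Real.sqrt_pos.2 hκ
  have hk2 : Real.sqrt κ ^ 2 = κ := Real.sq_sqrt hκ.le
  have ha2 : Real.sqrt a ^ 2 = a := Real.sq_sqrt ha.le
  have hsa : 0 < Real.sqrt a := Real.sqrt_pos.2 ha
  have key : Real.sqrt (1 + (Real.sqrt a * μ / Real.sqrt κ) ^ 2)
      = Real.sqrt (a * μ ^ 2 + κ) / Real.sqrt κ := by
    rw [show (1 : ℝ) + (Real.sqrt a * μ / Real.sqrt κ) ^ 2
        = (Real.sqrt (a * μ ^ 2 + κ) / Real.sqrt κ) ^ 2 by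
      rw [div_pow, div_pow, Real.sq_sqrt (by positivity)]
      field_simp
      linear_combination μ ^ 2 * ha2 - Real.sq_sqrt (show (0:ℝ) ≤ μ ^ 2 * a + κ by positivity)]
    exact Real.sqrt_sq (by positivity)
  rw [Real.arsinh, key, show Real.sqrt a * μ / Real.sqrt κ + Real.sqrt (a * μ ^ 2 + κ) / Real.sqrt κ
      = (Real.sqrt a * μ + Real.sqrt (a * μ ^ 2 + κ)) / Real.sqrt κ by ring,
    Real.log_div (by positivity) hsk.ne', Real.log_sqrt hκ.le]

/-- For fixed `μ, a > 0` and small `κ > 0`,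
`∫₀^μ (√(κ + a x²) − √a x) dx = −(κ/(4√a)) ln κ + O(κ)`. -/
theorem statement10 (μ a : ℝ) (hμ : 0 < μ) (ha : 0 < a) :
    ∃ C : ℝ, 0 < C ∧ ∃ κ₀ ∈ Set.Ioo (0 : ℝ) 1, ∀ κ ∈ Set.Ioo (0 : ℝ) κ₀,
      |(∫ x in Set.Ioo (0 : ℝ) μ, (Real.sqrt (κ + a * x ^ 2) - Real.sqrt a * x))
          + (κ / (4 * Real.sqrt a)) * Real.log κ| ≤ C * κ := by
  have hsa : 0 < Real.sqrt a := Real.sqrt_pos.2 ha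
  set r := Real.sqrt a with hr
  set L : ℝ := |Real.log (r * μ)| + |Real.log (r * μ + Real.sqrt (a * μ ^ 2 + 1))| with hL
  refine ⟨1 / (4 * r) + L / (2 * r) + 1, by positivity, 1/2, by norm_num, fun κ hκ => ?_⟩
  obtain ⟨hκ0, hκ1⟩ := hκ
  have hκ1' : κ < 1 := by linarith
  set s := Real.sqrt (κ + a * μ ^ 2) with hs
  have hs2 : s ^ 2 = κ + a * μ ^ 2 := Real.sq_sqrt (by positivity)
  have ha2 : r ^ 2 = a := Real.sq_sqrt ha.le
  have hspos : 0 < s := Real.sqrt_pos.2 (by positivity)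
  have hge : r * μ ≤ s := by nlinarith
  set arg := r * μ + Real.sqrt (a * μ ^ 2 + κ) with harg
  have hargpos : 0 < arg := by positivity
  have hEeq : (∫ x in Set.Ioo (0 : ℝ) μ, (Real.sqrt (κ + a * x ^ 2) - Real.sqrt a * x))
        + (κ / (4 * r)) * Real.log κ
      = μ / 2 * (s - r * μ) + κ / (2 * r) * Real.log arg := by
    rw [st10_ftc μ a κ hμ ha hκ0, st10_logid μ a κ hμ ha hκ0, ← hr, ← harg, ← hs]
    field_simp
    ring
  rw [hEeq]
  have h1 : |μ / 2 * (s - r * μ)| ≤ κ / (4 * r) := by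
    rw [abs_of_nonneg (by nlinarith)]
    rw [le_div_iff₀ (by positivity : (0:ℝ) < 4 * r)]
    nlinarith [sq_nonneg (s - r * μ)]
  have h2 : |κ / (2 * r) * Real.log arg| ≤ κ / (2 * r) * L := by
    rw [abs_mul, abs_of_pos (div_pos hκ0 (by positivity))]
    refine mul_le_mul_of_nonneg_left ?_ (div_pos hκ0 (by positivity)).le
    have hlo : Real.log (r * μ) ≤ Real.log arg :=
      Real.log_le_log (by positivity) (by nlinarith [Real.sqrt_nonneg (a * μ ^ 2 + κ)])
    have hhi : Real.log arg ≤ Real.log (r * μ + Real.sqrt (a * μ ^ 2 + 1)) := by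
      apply Real.log_le_log hargpos
      have := Real.sqrt_le_sqrt (show a * μ ^ 2 + κ ≤ a * μ ^ 2 + 1 by linarith)
      linarith
    rw [hL]
    cases' abs_cases (Real.log arg) with h h <;>
    [skip; skip] <;>
    · rw [h.1]
      have := neg_abs_le (Real.log (r * μ))
      have := le_abs_self (Real.log (r * μ + Real.sqrt (a * μ ^ 2 + 1)))
      have := neg_abs_le (Real.log (r * μ + Real.sqrt (a * μ ^ 2 + 1)))
      have := le_abs_self (Real.log (r * μ))
      have := abs_nonneg (Real.log (r * μ))
      have := abs_nonneg (Real.log (r * μ + Real.sqrt (a * μ ^ 2 + 1)))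
      linarith
  calc |μ / 2 * (s - r * μ) + κ / (2 * r) * Real.log arg|
      ≤ |μ / 2 * (s - r * μ)| + |κ / (2 * r) * Real.log arg| := abs_add_le _ _
    _ ≤ κ / (4 * r) + κ / (2 * r) * L := add_le_add h1 h2
    _ ≤ (1 / (4 * r) + L / (2 * r) + 1) * κ := by
        have : (1 / (4 * r) + L / (2 * r) + 1) * κ = κ / (4 * r) + κ / (2 * r) * L + κ := by
          field_simp
        linarith
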